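/- arXiv:1906.02435 — 8 statements merged into one kernel-verified Lean document; each statement's English description precedes it below -/
import Mathlib

section
/- For any orthogonal matrix A in O(n,ℝ), the sum of fourth powers of its entries lies in the interval [1, n], and it equals n if and only if A is a signed permutation matrix (every entry is 0, 1, or -1). -/
open Matrix Finset

/-- The fourth power of the entrywise ℓ⁴-norm of a matrix. -/
def l4pow4 {n : ℕ} (A : Matrix (Fin n) (Fin n) ℝ) : ℝ :=
  ∑ i, ∑ j, A i j ^ 4

/-- A signed permutation matrix: an orthogonal matrix all of whose entries are 0, 1 or -1. -/
def IsSignedPerm {n : ℕ} (P : Matrix (Fin n) (Fin n) ℝ) : Prop :=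
  Pᵀ * P = 1 ∧ ∀ i j, P i j = 0 ∨ P i j = 1 ∨ P i j = -1

lemma col_sq_sum {n : ℕ} (A : Matrix (Fin n) (Fin n) ℝ) (hA : Aᵀ * A = 1) (j : Fin n) :
    ∑ i, A i j ^ 2 = 1 := by
  have h := congrFun (congrFun hA j) j
  simpa [Matrix.mul_apply, Matrix.transpose_apply, Matrix.one_apply, sq] using h

/-- For any orthogonal matrix `A`, `‖A‖₄⁴ ∈ [1, n]`, with equality `‖A‖₄⁴ = n`
iff `A` is a signed permutation matrix. -/
theorem l4_extrema_over_orthogonal_group {n : ℕ} (hn : 0 < n)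
    (A : Matrix (Fin n) (Fin n) ℝ) (hA : Aᵀ * A = 1) :
    (1 ≤ l4pow4 A ∧ l4pow4 A ≤ n) ∧
      (l4pow4 A = n ↔ IsSignedPerm A) := by
  have col := col_sq_sum A hA
  have sq_le : ∀ i j, A i j ^ 2 ≤ 1 := fun i j => by
    calc A i j ^ 2 ≤ ∑ k, A k j ^ 2 :=
          Finset.single_le_sum (f := fun k => A k j ^ 2) (fun k _ => sq_nonneg _) (Finset.mem_univ i)
      _ = 1 := col j
  have term_le : ∀ i j, A i j ^ 4 ≤ A i j ^ 2 := fun i j => by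
    nlinarith [sq_nonneg (A i j), sq_le i j]
  have sum_sq : ∑ i, ∑ j, A i j ^ 2 = (n : ℝ) := by
    rw [Finset.sum_comm]
    simp [col]
  have upper : l4pow4 A ≤ n := by
    unfold l4pow4
    calc ∑ i, ∑ j, A i j ^ 4 ≤ ∑ i, ∑ j, A i j ^ 2 :=
          Finset.sum_le_sum (fun i _ => Finset.sum_le_sum fun j _ => term_le i j)
      _ = n := sum_sq
  have lower_col : ∀ j, (1 : ℝ) ≤ n * ∑ i, A i j ^ 4 := fun j => by
    have h := Finset.sum_mul_sq_le_sq_mul_sq Finset.univ (fun i => A i j ^ 2) (fun _ => (1:ℝ))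
    simp only [mul_one, one_pow] at h
    have h2 : (∑ i, A i j ^ 2) ^ 2 ≤ (∑ i, (A i j ^ 2) ^ 2) * n := by
      simpa using h
    have : ∀ i, (A i j ^ 2) ^ 2 = A i j ^ 4 := fun i => by ring
    rw [col j] at h2
    simp only [this] at h2
    linarith [h2]
  have lower : 1 ≤ l4pow4 A := by
    have hsum : (n : ℝ) * 1 ≤ (n : ℝ) * l4pow4 A := by
      unfold l4pow4
      rw [Finset.sum_comm, Finset.mul_sum]
      calc (n:ℝ) * 1 = ∑ _j : Fin n, (1:ℝ) := by simp
        _ ≤ ∑ j, (n : ℝ) * ∑ i, A i j ^ 4 :=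
            Finset.sum_le_sum fun j _ => lower_col j
    have hn' : (0:ℝ) < n := by exact_mod_cast hn
    exact le_of_mul_le_mul_left hsum hn'
  refine ⟨⟨lower, upper⟩, ?_, ?_⟩
  · intro heq
    refine ⟨hA, fun i j => ?_⟩
    have hzero : ∑ i, ∑ j, (A i j ^ 2 - A i j ^ 4) = 0 := by
      have : ∑ i, ∑ j, (A i j ^ 2 - A i j ^ 4)
          = (∑ i, ∑ j, A i j ^ 2) - ∑ i, ∑ j, A i j ^ 4 := by
        simp [Finset.sum_sub_distrib]
      rw [this, sum_sq]
      unfold l4pow4 at heq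
      rw [heq]; ring
    have hterm : ∀ i ∈ Finset.univ, ∀ j ∈ Finset.univ, A i j ^ 2 - A i j ^ 4 = 0 := by
      have hnn : ∀ i ∈ (Finset.univ : Finset (Fin n)), 0 ≤ ∑ j, (A i j ^ 2 - A i j ^ 4) :=
        fun i _ => Finset.sum_nonneg fun j _ => by linarith [term_le i j]
      have hrow : ∀ i ∈ (Finset.univ : Finset (Fin n)), ∑ j, (A i j ^ 2 - A i j ^ 4) = 0 :=
        (Finset.sum_eq_zero_iff_of_nonneg hnn).mp hzero
      intro i hi j hj
      exact (Finset.sum_eq_zero_iff_of_nonneg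
        (fun j _ => by linarith [term_le i j])).mp (hrow i hi) j hj
    have h0 := hterm i (Finset.mem_univ i) j (Finset.mem_univ j)
    have : A i j ^ 2 * (1 - A i j ^ 2) = 0 := by nlinarith [h0]
    rcases mul_eq_zero.mp this with h | h
    · left; exact pow_eq_zero_iff (by norm_num) |>.mp h
    · right
      have : A i j * A i j = 1 := by nlinarith [h]
      exact mul_self_eq_one_iff.mp this
  · rintro ⟨-, hentries⟩
    have : ∀ i j, A i j ^ 4 = A i j ^ 2 := fun i j => by
      rcases hentries i j with h | h | h <;> rw [h] <;> norm_num
    unfold l4pow4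
    simp only [this]
    exact sum_sq
end

section
/- Let W be an n×n orthogonal matrix and ε ∈ [0,1]. If (1/n)‖W‖₄⁴ ≥ 1 − ε, then there exists a signed permutation matrix P such that (1/n)‖W − P‖_F² ≤ 2ε. -/
open Matrix Finset

/-- The squared Frobenius norm of a matrix. -/
def frobSq {n : ℕ} (A : Matrix (Fin n) (Fin n) ℝ) : ℝ :=
  ∑ i, ∑ j, A i j ^ 2

lemma sq_le_abs_of_sq_le_one {x : ℝ} (hx : x ^ 2 ≤ 1) : x ^ 2 ≤ |x| := by
  have h1 : |x| ≤ 1 := abs_le_one_iff_mul_self_le_one.mpr (by nlinarith)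
  have h2 : (0:ℝ) ≤ |x| := abs_nonneg x
  nlinarith [sq_abs x]

/-- Approximate maxima of the ℓ⁴-norm over the orthogonal group: if an orthogonal `W`
satisfies `(1/n)‖W‖₄⁴ ≥ 1 - ε` for `ε ∈ [0,1]`, then `W` is within squared Frobenius
distance `2nε` of some signed permutation matrix. -/
theorem l4_approx_maxima_orthogonal {n : ℕ} (hn : 0 < n)
    (W : Matrix (Fin n) (Fin n) ℝ) (hW : Wᵀ * W = 1)
    (ε : ℝ) (hε : ε ∈ Set.Icc (0 : ℝ) 1)
    (h : 1 - ε ≤ (1 / (n : ℝ)) * l4pow4 W) :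
    ∃ P : Matrix (Fin n) (Fin n) ℝ, IsSignedPerm P ∧
      (1 / (n : ℝ)) * frobSq (W - P) ≤ 2 * ε := by
  obtain ⟨hε0, hε1⟩ := hε
  have hn' : (0:ℝ) < n := by exact_mod_cast hn
  have hWWT : W * Wᵀ = 1 := mul_eq_one_comm.mp hW
  have hcol : ∀ j, ∑ i, W i j ^ 2 = 1 := by
    intro j
    have := congrFun (congrFun hW j) j
    simpa [Matrix.mul_apply, Matrix.one_apply, pow_two] using this
  have hrow : ∀ i, ∑ j, W i j ^ 2 = 1 := by
    intro i
    have := congrFun (congrFun hWWT i) i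
    simpa [Matrix.mul_apply, Matrix.one_apply, pow_two] using this
  -- the matrix of squares is doubly stochastic
  have hMds : Matrix.of (fun i j => W i j ^ 2) ∈ doublyStochastic ℝ (Fin n) := by
    rw [mem_doublyStochastic_iff_sum]
    exact ⟨fun i j => sq_nonneg _, fun i => hrow i, fun j => hcol j⟩
  obtain ⟨w, hw0, hw1, hwM⟩ := exists_eq_sum_perm_of_mem_doublyStochastic hMds
  have hperm : ∀ (σ : Equiv.Perm (Fin n)) i j,
      σ.permMatrix ℝ i j = if σ i = j then 1 else 0 := by
    intro σ i j
    simp [Equiv.Perm.permMatrix, PEquiv.toMatrix_apply, Equiv.toPEquiv_apply]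
  have hMentry : ∀ i j, W i j ^ 2 = ∑ σ : Equiv.Perm (Fin n), w σ * σ.permMatrix ℝ i j := by
    intro i j
    have := congrFun (congrFun hwM.symm i) j
    simpa [Matrix.sum_apply] using this
  have hl4 : l4pow4 W = ∑ σ : Equiv.Perm (Fin n), w σ * ∑ i, W i (σ i) ^ 2 := by
    unfold l4pow4
    calc ∑ i, ∑ j, W i j ^ 4
        = ∑ i, ∑ j, ∑ σ : Equiv.Perm (Fin n), w σ * σ.permMatrix ℝ i j * W i j ^ 2 := by
          refine Finset.sum_congr rfl fun i _ => Finset.sum_congr rfl fun j _ => ?_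
          rw [show (4:ℕ) = 2 + 2 from rfl, pow_add, hMentry i j, Finset.sum_mul]
      _ = ∑ i, ∑ σ : Equiv.Perm (Fin n), ∑ j, w σ * σ.permMatrix ℝ i j * W i j ^ 2 :=
          Finset.sum_congr rfl fun i _ => Finset.sum_comm
      _ = ∑ σ : Equiv.Perm (Fin n), ∑ i, ∑ j, w σ * σ.permMatrix ℝ i j * W i j ^ 2 :=
          Finset.sum_comm
      _ = ∑ σ : Equiv.Perm (Fin n), w σ * ∑ i, W i (σ i) ^ 2 := by
          refine Finset.sum_congr rfl fun σ _ => ?_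
          rw [Finset.mul_sum]
          refine Finset.sum_congr rfl fun i _ => ?_
          simp [Equiv.Perm.permMatrix, PEquiv.toMatrix_apply, Equiv.toPEquiv_apply,
            Option.some.injEq, mul_ite, mul_one, mul_zero, ite_mul, zero_mul,
            Finset.sum_ite_eq]
  have hS : (n:ℝ) * (1 - ε) ≤ l4pow4 W := by
    have h2 : (n:ℝ) * (1/(n:ℝ)) = 1 := mul_one_div_cancel hn'.ne'
    have hm := mul_le_mul_of_nonneg_left h hn'.le
    rw [← mul_assoc, h2, one_mul] at hm
    exact hm
  -- find a good permutation
  have hmax : ∃ σ₀ : Equiv.Perm (Fin n), l4pow4 W ≤ ∑ i, W i (σ₀ i) ^ 2 := by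
    by_contra hc
    push_neg at hc
    have hpos : ∃ σ : Equiv.Perm (Fin n), 0 < w σ := by
      by_contra hp
      push_neg at hp
      have : ∑ σ : Equiv.Perm (Fin n), w σ = 0 :=
        Finset.sum_eq_zero fun σ _ => le_antisymm (hp σ) (hw0 σ)
      rw [hw1] at this; norm_num at this
    obtain ⟨σ₁, hσ₁⟩ := hpos
    have hlt : ∑ σ : Equiv.Perm (Fin n), w σ * ∑ i, W i (σ i) ^ 2
        < ∑ σ : Equiv.Perm (Fin n), w σ * l4pow4 W := by
      refine Finset.sum_lt_sum (fun σ _ => mul_le_mul_of_nonneg_left (hc σ).le (hw0 σ))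
        ⟨σ₁, Finset.mem_univ _, mul_lt_mul_of_pos_left (hc σ₁) hσ₁⟩
    rw [← Finset.sum_mul, hw1, one_mul, ← hl4] at hlt
    exact lt_irrefl _ hlt
  obtain ⟨σ₀, hσ₀⟩ := hmax
  -- the signed permutation matrix
  set s : Fin n → ℝ := fun i => if 0 ≤ W i (σ₀ i) then 1 else -1 with hs
  set P : Matrix (Fin n) (Fin n) ℝ := Matrix.of (fun i j => if σ₀ i = j then s i else 0) with hP
  have hs_sq : ∀ i, s i * s i = 1 := by
    intro i; simp only [hs]; split_ifs <;> norm_num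
  have hs_abs : ∀ i, s i * W i (σ₀ i) = |W i (σ₀ i)| := by
    intro i; simp only [hs]
    split_ifs with hi
    · rw [abs_of_nonneg hi]; ring
    · rw [abs_of_neg (not_le.mp hi)]; ring
  have hPTP : Pᵀ * P = 1 := by
    ext j k
    simp only [Matrix.mul_apply, Matrix.transpose_apply, hP, Matrix.of_apply]
    have : ∀ i, (if σ₀ i = j then s i else 0) * (if σ₀ i = k then s i else 0)
        = if i = σ₀.symm j then (if j = k then 1 else 0) else 0 := by
      intro i
      by_cases h1 : σ₀ i = j
      · have hi : i = σ₀.symm j := by rw [← h1, Equiv.symm_apply_apply]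
        by_cases h2 : σ₀ i = k
        · have hjk : j = k := h1 ▸ h2
          rw [if_pos h1, if_pos h2, if_pos hi, if_pos hjk, hs_sq i]
        · have hjk : ¬ j = k := fun hh => h2 (hh ▸ h1)
          rw [if_pos h1, if_neg h2, if_pos hi, if_neg hjk, mul_zero]
      · have hi : ¬ i = σ₀.symm j := fun hh => h1 (by rw [hh, Equiv.apply_symm_apply])
        rw [if_neg h1, if_neg hi, zero_mul]
    rw [Finset.sum_congr rfl fun i _ => this i, Finset.sum_ite_eq' Finset.univ (σ₀.symm j)]
    simp [Matrix.one_apply]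
  have hPentries : ∀ i j, P i j = 0 ∨ P i j = 1 ∨ P i j = -1 := by
    intro i j
    simp only [hP, Matrix.of_apply, hs]
    split_ifs <;> simp
  -- norms
  have hfrobW : frobSq W = n := by
    unfold frobSq; simp [hrow]
  have hfrobP : frobSq P = n := by
    unfold frobSq
    have : ∀ i, ∑ j, P i j ^ 2 = 1 := by
      intro i
      simp only [hP, Matrix.of_apply]
      simp [ite_pow, pow_two, hs_sq, Finset.sum_ite_eq]
    simp [this]
  have hcross : ∑ i, ∑ j, W i j * P i j = ∑ i, |W i (σ₀ i)| := by
    refine Finset.sum_congr rfl fun i _ => ?_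
    simp only [hP, Matrix.of_apply, mul_ite, mul_zero]
    rw [Finset.sum_ite_eq Finset.univ (σ₀ i)]
    simp only [Finset.mem_univ, if_true]
    rw [mul_comm]
    exact hs_abs i
  have habs_ge : ∀ i, W i (σ₀ i) ^ 2 ≤ |W i (σ₀ i)| := by
    intro i
    refine sq_le_abs_of_sq_le_one ?_
    rw [← hrow i]
    exact Finset.single_le_sum (f := fun j => W i j ^ 2) (fun j _ => sq_nonneg _)
      (Finset.mem_univ (σ₀ i))
  have hcross_ge : (n:ℝ) * (1 - ε) ≤ ∑ i, ∑ j, W i j * P i j := by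
    rw [hcross]
    calc (n:ℝ) * (1 - ε) ≤ l4pow4 W := hS
      _ ≤ ∑ i, W i (σ₀ i) ^ 2 := hσ₀
      _ ≤ ∑ i, |W i (σ₀ i)| := Finset.sum_le_sum fun i _ => habs_ge i
  have hexpand : frobSq (W - P) = frobSq W - 2 * (∑ i, ∑ j, W i j * P i j) + frobSq P := by
    unfold frobSq
    simp only [Matrix.sub_apply]
    rw [Finset.mul_sum, ← Finset.sum_sub_distrib, ← Finset.sum_add_distrib]
    refine Finset.sum_congr rfl fun i _ => ?_
    rw [Finset.mul_sum, ← Finset.sum_sub_distrib, ← Finset.sum_add_distrib]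
    refine Finset.sum_congr rfl fun j _ => ?_
    ring
  have hfinal : frobSq (W - P) ≤ 2 * (n:ℝ) * ε := by
    rw [hexpand, hfrobW, hfrobP]
    nlinarith [hcross_ge]
  refine ⟨P, ⟨hPTP, hPentries⟩, ?_⟩
  rw [one_div, inv_mul_le_iff₀ hn']
  calc frobSq (W - P) ≤ 2 * (n:ℝ) * ε := hfinal
    _ = (n:ℝ) * (2 * ε) := by ring
end

section
/- Let q be a unit vector in ℝⁿ and ε ∈ [0,1] with ∑ᵢ qᵢ⁴ ≥ 1 − ε. Then there exists an index i such that if qᵢ > 0 then ‖q − eᵢ‖₂² ≤ 2ε, and if qᵢ < 0 then ‖q + eᵢ‖₂² ≤ 2ε. -/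
open Finset

/-- If `q` is a unit vector in `ℝⁿ` with `∑ᵢ qᵢ⁴ ≥ 1 - ε` for `ε ∈ [0,1]`, then `q` is
within squared ℓ²-distance `2ε` of a signed canonical basis vector: there is an index `i`
such that if `qᵢ > 0` then `‖q - eᵢ‖₂² ≤ 2ε`, and if `qᵢ < 0` then `‖q + eᵢ‖₂² ≤ 2ε`. -/
theorem l4_single_vector_sphere {n : ℕ} (q : Fin n → ℝ)
    (hq : ∑ i, q i ^ 2 = 1)
    (ε : ℝ) (hε : ε ∈ Set.Icc (0 : ℝ) 1)
    (h : 1 - ε ≤ ∑ i, q i ^ 4) :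
    ∃ i : Fin n,
      (0 < q i → ∑ j, (q j - (if j = i then (1:ℝ) else 0)) ^ 2 ≤ 2 * ε) ∧
      (q i < 0 → ∑ j, (q j + (if j = i then (1:ℝ) else 0)) ^ 2 ≤ 2 * ε) := by
  obtain ⟨hε0, hε1⟩ := hε
  have hn : (univ : Finset (Fin n)).Nonempty := by
    by_contra hc
    rw [not_nonempty_iff_eq_empty] at hc
    rw [hc, Finset.sum_empty] at hq
    norm_num at hq
  obtain ⟨i, -, hi⟩ := Finset.exists_max_image univ (fun j => (q j)^2) hn
  refine ⟨i, ?_, ?_⟩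
  all_goals intro hqi
  · -- q i > 0 case
    have h4 : ∑ j, q j ^ 4 ≤ (q i)^2 := by
      calc ∑ j, q j ^ 4 ≤ ∑ j, (q i)^2 * q j ^ 2 := by
            apply Finset.sum_le_sum
            intro j hj
            have := hi j (mem_univ j)
            nlinarith [sq_nonneg (q j)]
        _ = (q i)^2 := by rw [← Finset.mul_sum, hq, mul_one]
    have hsq : 1 - ε ≤ (q i)^2 := le_trans h h4
    have hroot : Real.sqrt (1 - ε) ≤ q i := by
      rw [show (q i) = Real.sqrt ((q i)^2) from (Real.sqrt_sq hqi.le).symm]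
      exact Real.sqrt_le_sqrt hsq
    have hlow : 1 - ε ≤ q i := by
      have : (1 - ε) ≤ Real.sqrt (1 - ε) := by
        nlinarith [Real.sq_sqrt (by linarith : (0:ℝ) ≤ 1 - ε),
          Real.sqrt_nonneg (1 - ε)]
      linarith
    have hexp : ∑ j, (q j - (if j = i then (1:ℝ) else 0)) ^ 2 = 2 - 2 * q i := by
      have : ∀ j, (q j - (if j = i then (1:ℝ) else 0)) ^ 2
          = q j ^ 2 - 2 * (if j = i then q j else 0) + (if j = i then (1:ℝ) else 0) := by
        intro j; split <;> ring
      simp only [this, Finset.sum_add_distrib, Finset.sum_sub_distrib, ← Finset.mul_sum,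
        Finset.sum_ite_eq', mem_univ, if_true, hq]
      ring
    rw [hexp]; linarith
  · -- q i < 0 case
    have h4 : ∑ j, q j ^ 4 ≤ (q i)^2 := by
      calc ∑ j, q j ^ 4 ≤ ∑ j, (q i)^2 * q j ^ 2 := by
            apply Finset.sum_le_sum
            intro j hj
            have := hi j (mem_univ j)
            nlinarith [sq_nonneg (q j)]
        _ = (q i)^2 := by rw [← Finset.mul_sum, hq, mul_one]
    have hsq : 1 - ε ≤ (q i)^2 := le_trans h h4
    have hroot : Real.sqrt (1 - ε) ≤ -q i := by
      rw [show (-q i) = Real.sqrt ((q i)^2) by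
        rw [show (q i)^2 = (-q i)^2 by ring, Real.sqrt_sq (by linarith)]]
      exact Real.sqrt_le_sqrt hsq
    have hlow : 1 - ε ≤ -q i := by
      have : (1 - ε) ≤ Real.sqrt (1 - ε) := by
        nlinarith [Real.sq_sqrt (by linarith : (0:ℝ) ≤ 1 - ε),
          Real.sqrt_nonneg (1 - ε)]
      linarith
    have hexp : ∑ j, (q j + (if j = i then (1:ℝ) else 0)) ^ 2 = 2 + 2 * q i := by
      have : ∀ j, (q j + (if j = i then (1:ℝ) else 0)) ^ 2
          = q j ^ 2 + 2 * (if j = i then q j else 0) + (if j = i then (1:ℝ) else 0) := by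
        intro j; split <;> ring
      simp only [this, Finset.sum_add_distrib, ← Finset.mul_sum,
        Finset.sum_ite_eq', mem_univ, if_true, hq]
      ring
    rw [hexp]; linarith
end

section
/- Let q₁,…,q_k be unit vectors in ℝⁿ and ε ∈ [0,1] with (1/k)∑ᵢ ‖qᵢ‖₄⁴ ≥ 1 − ε. Then for each i there exist an index jᵢ ∈ {1,…,n} and a sign sᵢ ∈ {1,−1} such that (1/k)∑ᵢ ‖qᵢ − sᵢ e_{jᵢ}‖₂² ≤ 2ε. -/
open Finset

lemma single_vec {n : ℕ} (q : Fin n → ℝ) (hq : ∑ l, q l ^ 2 = 1) :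
    ∃ (j : Fin n) (s : ℝ), (s = 1 ∨ s = -1) ∧
      ∑ l, (q l - s * (if l = j then (1:ℝ) else 0)) ^ 2 ≤ 2 - 2 * ∑ l, q l ^ 4 := by
  have hn : Nonempty (Fin n) := by
    by_contra hc
    simp [not_nonempty_iff] at hc
    rw [Finset.univ_eq_empty, Finset.sum_empty] at hq
    norm_num at hq
  obtain ⟨j, _, hj⟩ := Finset.exists_max_image Finset.univ (fun l => |q l|)
    ⟨Classical.arbitrary _, Finset.mem_univ _⟩
  refine ⟨j, if 0 ≤ q j then 1 else -1, by split <;> simp, ?_⟩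
  set s : ℝ := if 0 ≤ q j then 1 else -1 with hs
  have hsq : s * q j = |q j| := by
    rw [hs]; rcases le_or_gt 0 (q j) with h0 | h0
    · rw [if_pos h0, abs_of_nonneg h0]; ring
    · rw [if_neg (not_le.mpr h0), abs_of_neg h0]; ring
  have hqj1 : |q j| ≤ 1 := by
    have : q j ^ 2 ≤ 1 := by
      rw [← hq]
      exact Finset.single_le_sum (fun l _ => sq_nonneg (q l)) (Finset.mem_univ j)
    nlinarith [abs_nonneg (q j), sq_abs (q j)]
  have h4 : ∑ l, q l ^ 4 ≤ |q j| := by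
    calc ∑ l, q l ^ 4 ≤ ∑ l, q j ^ 2 * q l ^ 2 := by
          apply Finset.sum_le_sum
          intro l _
          have h1 := hj l (Finset.mem_univ l)
          have h2 : q l ^ 2 ≤ q j ^ 2 := by nlinarith [abs_nonneg (q l), sq_abs (q l), sq_abs (q j)]
          nlinarith [sq_nonneg (q l)]
      _ = q j ^ 2 := by rw [← Finset.mul_sum, hq, mul_one]
      _ ≤ |q j| := by nlinarith [sq_abs (q j), abs_nonneg (q j)]
  have hexp : ∑ l, (q l - s * (if l = j then (1:ℝ) else 0)) ^ 2
      = 2 - 2 * |q j| := by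
    have hss : s ^ 2 = 1 := by rw [hs]; split <;> norm_num
    have : ∀ l, (q l - s * (if l = j then (1:ℝ) else 0)) ^ 2
        = q l ^ 2 + (if l = j then (s^2 - 2 * (s * q j)) else 0) := by
      intro l; by_cases hl : l = j
      · simp only [hl, if_pos]; ring
      · simp only [hl, if_neg, ite_false]; ring
    rw [Finset.sum_congr rfl (fun l _ => this l), Finset.sum_add_distrib, hq,
      Finset.sum_ite_eq' Finset.univ j, if_pos (Finset.mem_univ j), hss, hsq]
    ring
  rw [hexp]
  linarith

/-- Multiple-vector version: if `q₁, …, q_k` are unit vectors in `ℝⁿ` with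
`(1/k) ∑ᵢ ‖qᵢ‖₄⁴ ≥ 1 - ε` for `ε ∈ [0,1]`, then there are indices `jᵢ` and signs
`sᵢ ∈ {1,-1}` such that `(1/k) ∑ᵢ ‖qᵢ - sᵢ e_{jᵢ}‖₂² ≤ 2ε`. -/
theorem l4_multiple_vectors_sphere {k n : ℕ} (q : Fin k → Fin n → ℝ)
    (hq : ∀ i, ∑ l, q i l ^ 2 = 1)
    (ε : ℝ) (hε : ε ∈ Set.Icc (0 : ℝ) 1)
    (h : 1 - ε ≤ (1 / (k : ℝ)) * ∑ i, ∑ l, q i l ^ 4) :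
    ∃ (j : Fin k → Fin n) (s : Fin k → ℝ),
      (∀ i, s i = 1 ∨ s i = -1) ∧
      (1 / (k : ℝ)) * ∑ i, ∑ l, (q i l - s i * (if l = j i then (1:ℝ) else 0)) ^ 2 ≤ 2 * ε := by
  rcases Nat.eq_zero_or_pos k with hk | hk
  · subst hk
    exact ⟨fun i => i.elim0, fun _ => 1, fun i => Or.inl rfl, by
      simp; linarith [hε.1]⟩
  have hkpos : (0:ℝ) < k := by positivity
  choose j s hs hsum using fun i => single_vec (q i) (hq i)
  refine ⟨j, s, hs, ?_⟩
  have h1 : ∑ i, ∑ l, (q i l - s i * (if l = j i then (1:ℝ) else 0)) ^ 2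
      ≤ ∑ i : Fin k, (2 - 2 * ∑ l, q i l ^ 4) := Finset.sum_le_sum fun i _ => hsum i
  have h2 : ∑ i : Fin k, (2 - 2 * ∑ l, q i l ^ 4)
      = 2 * k - 2 * ∑ i, ∑ l, q i l ^ 4 := by
    rw [Finset.sum_sub_distrib, Finset.sum_const, ← Finset.mul_sum]
    simp [mul_comm]
  rw [div_mul_eq_mul_div, div_le_iff₀ hkpos]
  have h3 : (1 - ε) * k ≤ ∑ i, ∑ l, q i l ^ 4 := by
    rw [← le_div_iff₀ hkpos]
    rwa [one_div, inv_mul_eq_div] at h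
  linarith
end

section
/- For any square matrix A ∈ ℝⁿˣⁿ with singular value decomposition A = UΣVᵀ, the orthogonal matrix M minimizing ‖A − M‖_F over all M ∈ O(n,ℝ) is M = UVᵀ. -/
open Matrix Finset

lemma frobSq_eq_trace {n : ℕ} (A : Matrix (Fin n) (Fin n) ℝ) :
    frobSq A = Matrix.trace (Aᵀ * A) := by
  simp only [frobSq, Matrix.trace, Matrix.diag, Matrix.mul_apply, Matrix.transpose_apply, sq]
  exact Finset.sum_comm

lemma trace_le {n : ℕ} (S Q : Matrix (Fin n) (Fin n) ℝ)
    (hSdiag : S.IsDiag) (hSnonneg : ∀ i, 0 ≤ S i i) (hQ : Qᵀ * Q = 1) :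
    Matrix.trace (S * Q) ≤ Matrix.trace S := by
  have hQ1 : ∀ i, Q i i ≤ 1 := by
    intro i
    have h := congrFun (congrFun hQ i) i
    simp only [Matrix.mul_apply, Matrix.transpose_apply, Matrix.one_apply_eq] at h
    have h2 : Q i i ^ 2 ≤ 1 := by
      rw [← h]
      have : Q i i ^ 2 = Q i i * Q i i := sq (Q i i) ▸ rfl
      calc Q i i ^ 2 = Q i i * Q i i := by ring
        _ ≤ ∑ k, Q k i * Q k i :=
          Finset.single_le_sum (f := fun k => Q k i * Q k i)
            (fun k _ => mul_self_nonneg _) (Finset.mem_univ i)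
    nlinarith [sq_nonneg (Q i i - 1), sq_nonneg (Q i i + 1)]
  have : Matrix.trace (S * Q) = ∑ i, S i i * Q i i := by
    simp only [Matrix.trace, Matrix.diag, Matrix.mul_apply]
    apply Finset.sum_congr rfl
    intro i _
    rw [Finset.sum_eq_single i]
    · intro j _ hj
      rw [hSdiag (Ne.symm hj), zero_mul]
    · intro h; exact absurd (Finset.mem_univ i) h
  rw [this]
  unfold Matrix.trace Matrix.diag
  apply Finset.sum_le_sum
  intro i _
  calc S i i * Q i i ≤ S i i * 1 := mul_le_mul_of_nonneg_left (hQ1 i) (hSnonneg i)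
    _ = S i i := mul_one _

/-- Projection onto the orthogonal group: if `A = U Σ Vᵀ` is a singular value
decomposition of `A` (with `U`, `V` orthogonal and `Σ` diagonal with nonnegative
entries), then `U Vᵀ` minimizes the Frobenius distance to `A` among all orthogonal
matrices. -/
theorem svd_polar_factor_closest_orthogonal {n : ℕ}
    (A U S V : Matrix (Fin n) (Fin n) ℝ)
    (hU : Uᵀ * U = 1) (hV : Vᵀ * V = 1)
    (hSdiag : S.IsDiag) (hSnonneg : ∀ i, 0 ≤ S i i)
    (hSVD : A = U * S * Vᵀ) :
    ∀ M : Matrix (Fin n) (Fin n) ℝ, Mᵀ * M = 1 →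
      frobSq (A - U * Vᵀ) ≤ frobSq (A - M) := by
  intro M hM
  have hU' : U * Uᵀ = 1 := mul_eq_one_comm.mp hU
  have hV' : V * Vᵀ = 1 := mul_eq_one_comm.mp hV
  -- general expansion
  have expand : ∀ X : Matrix (Fin n) (Fin n) ℝ, Xᵀ * X = 1 →
      frobSq (A - X) = Matrix.trace (Aᵀ * A) + (n : ℝ) - 2 * Matrix.trace (Aᵀ * X) := by
    intro X hX
    rw [frobSq_eq_trace]
    have : (A - X)ᵀ * (A - X) = Aᵀ * A - Aᵀ * X - Xᵀ * A + Xᵀ * X := by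
      rw [Matrix.transpose_sub]
      noncomm_ring
    rw [this, hX]
    have htr : Matrix.trace (Xᵀ * A) = Matrix.trace (Aᵀ * X) := by
      rw [← Matrix.trace_transpose (Xᵀ * A), Matrix.transpose_mul, Matrix.transpose_transpose]
    simp only [Matrix.trace_add, Matrix.trace_sub, htr, Matrix.trace_one]
    simp [Fintype.card_fin]
    ring
  have hUV : (U * Vᵀ)ᵀ * (U * Vᵀ) = 1 := by
    rw [Matrix.transpose_mul, Matrix.transpose_transpose]
    calc V * Uᵀ * (U * Vᵀ) = V * (Uᵀ * U) * Vᵀ := by noncomm_ring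
      _ = 1 := by rw [hU, Matrix.mul_one, hV']
  rw [expand _ hUV, expand _ hM]
  -- reduce to trace inequality
  have key : Matrix.trace (Aᵀ * M) ≤ Matrix.trace (Aᵀ * (U * Vᵀ)) := by
    have hST : Sᵀ = S := by
      ext i j
      by_cases h : i = j
      · subst h; rfl
      · rw [Matrix.transpose_apply, hSdiag (Ne.symm h), hSdiag h]
    have hAT : Aᵀ = V * S * Uᵀ := by
      rw [hSVD]
      simp only [Matrix.transpose_mul, Matrix.transpose_transpose, hST, Matrix.mul_assoc]
    have h1 : Matrix.trace (Aᵀ * (U * Vᵀ)) = Matrix.trace S := by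
      rw [hAT]
      have : V * S * Uᵀ * (U * Vᵀ) = V * S * Vᵀ := by
        calc V * S * Uᵀ * (U * Vᵀ) = V * S * (Uᵀ * U) * Vᵀ := by noncomm_ring
          _ = V * S * Vᵀ := by rw [hU, Matrix.mul_one]
      rw [this, Matrix.mul_assoc, Matrix.trace_mul_comm, Matrix.mul_assoc, hV,
        Matrix.mul_one]
    have h2 : Matrix.trace (Aᵀ * M) = Matrix.trace (S * (Uᵀ * M * V)) := by
      rw [hAT]
      have : V * S * Uᵀ * M = V * (S * (Uᵀ * M)) := by noncomm_ring
      rw [this, Matrix.trace_mul_comm]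
      congr 1
      noncomm_ring
    rw [h1, h2]
    apply trace_le _ _ hSdiag hSnonneg
    have hQt : (Uᵀ * M * V)ᵀ = Vᵀ * Mᵀ * U := by
      simp only [Matrix.transpose_mul, Matrix.transpose_transpose, Matrix.mul_assoc]
    rw [hQt]
    calc Vᵀ * Mᵀ * U * (Uᵀ * M * V) = Vᵀ * ((Mᵀ * (U * Uᵀ)) * M) * V := by noncomm_ring
      _ = Vᵀ * V := by rw [hU', Matrix.mul_one, hM, Matrix.mul_one]
      _ = 1 := hV
  linarith
end

section
/- Let x ∈ ℝⁿ have i.i.d. Bernoulli–Gaussian(θ) entries and W ∈ O(n,ℝ). Then the expectation of the vector (Wx)^{∘3} xᵀ (outer product of the entrywise cube of Wx with x) satisfies E[(Wx)^{∘3} xᵀ] = 3θ(1−θ) W^{∘3} + 3θ² W, where W^{∘3} denotes entrywise cubing. -/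
open Matrix MeasureTheory ProbabilityTheory Finset

/-- Entrywise cube of a matrix. -/
def cube {n : ℕ} (W : Matrix (Fin n) (Fin n) ℝ) : Matrix (Fin n) (Fin n) ℝ :=
  fun i j => W i j ^ 3

section Aux
open Real Filter

set_option linter.unusedSectionVars false
set_option linter.unusedVariables false



noncomputable def gw (x : ℝ) : ℝ := Real.exp (-(2⁻¹ : ℝ) * x ^ 2)

lemma integrable_pow_gw (k : ℕ) : Integrable (fun x : ℝ => x ^ k * gw x) := by
  have h := integrable_rpow_mul_exp_neg_mul_sq (b := 2⁻¹) (by norm_num) (s := (k : ℝ))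
    (by exact lt_of_lt_of_le (by norm_num) (Nat.cast_nonneg k))
  simpa [gw, Real.rpow_natCast] using h

lemma tendsto_pow_gw_atTop (k : ℕ) :
    Tendsto (fun x : ℝ => x ^ k * gw x) atTop (nhds 0) := by
  have h := rpow_mul_exp_neg_mul_sq_isLittleO_exp_neg (b := (2⁻¹ : ℝ)) (by norm_num) (k : ℝ)
  have h2 : Tendsto (fun x : ℝ => Real.exp (-(1/2) * x)) atTop (nhds 0) := by
    apply Real.tendsto_exp_atBot.comp
    exact Tendsto.const_mul_atTop_of_neg (by norm_num) tendsto_id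
  have := h.tendsto_zero_of_tendsto h2
  simpa [gw, Real.rpow_natCast] using this

lemma tendsto_pow_gw_atBot (k : ℕ) :
    Tendsto (fun x : ℝ => x ^ k * gw x) atBot (nhds 0) := by
  have h := (tendsto_pow_gw_atTop k).comp tendsto_neg_atBot_atTop
  have h2 : Tendsto (fun x : ℝ => ((-1 : ℝ) ^ k) * ((-x) ^ k * gw (-x))) atBot (nhds 0) := by
    simpa using h.const_mul ((-1 : ℝ) ^ k)
  refine h2.congr (fun x => ?_)
  have hg : gw (-x) = gw x := by simp [gw]
  have h3 : ((-1 : ℝ)) ^ k * (-x) ^ k = x ^ k := by rw [← mul_pow]; norm_num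
  rw [hg, ← mul_assoc, h3]

lemma gw_deriv (k : ℕ) (x : ℝ) :
    HasDerivAt (fun x : ℝ => x ^ (k + 1) * gw x)
      ((k + 1 : ℝ) * x ^ k * gw x - x ^ (k + 2) * gw x) x := by
  have h1 : HasDerivAt (fun x : ℝ => x ^ (k + 1)) ((k + 1 : ℝ) * x ^ k) x := by
    simpa using hasDerivAt_pow (k + 1) x
  have hg : HasDerivAt (fun x : ℝ => -(2⁻¹ : ℝ) * x ^ 2) (-(2⁻¹ : ℝ) * (2 * x ^ 1)) x :=
    (hasDerivAt_pow 2 x).const_mul (-(2⁻¹ : ℝ))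
  have h2 : HasDerivAt gw (Real.exp (-(2⁻¹ : ℝ) * x ^ 2) * (-(2⁻¹ : ℝ) * (2 * x ^ 1))) x :=
    (Real.hasDerivAt_exp _).comp x hg
  have : HasDerivAt (fun x : ℝ => x ^ (k + 1) * gw x) _ x := h1.mul h2
  convert this using 1
  simp [gw]; ring

lemma gauss_rec (k : ℕ) :
    ∫ x : ℝ, x ^ (k + 2) * gw x = (k + 1 : ℝ) * ∫ x : ℝ, x ^ k * gw x := by
  have hint : Integrable (fun x : ℝ => (k + 1 : ℝ) * x ^ k * gw x - x ^ (k + 2) * gw x) := by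
    apply Integrable.sub _ (integrable_pow_gw (k + 2))
    simpa [mul_assoc] using (integrable_pow_gw k).const_mul (k + 1 : ℝ)
  have h0 := integral_of_hasDerivAt_of_tendsto (f := fun x : ℝ => x ^ (k + 1) * gw x)
    (gw_deriv k) hint (tendsto_pow_gw_atBot (k + 1)) (tendsto_pow_gw_atTop (k + 1))
  rw [integral_sub (by simpa [mul_assoc] using (integrable_pow_gw k).const_mul (k + 1 : ℝ))
    (integrable_pow_gw (k + 2))] at h0
  have : ∫ x : ℝ, (k + 1 : ℝ) * x ^ k * gw x = (k + 1 : ℝ) * ∫ x : ℝ, x ^ k * gw x := by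
    simp_rw [mul_assoc]; exact integral_const_mul _ _
  rw [this] at h0
  linarith

lemma gw_int0 : ∫ x : ℝ, x ^ 0 * gw x = Real.sqrt (2 * π) := by
  have := integral_gaussian (2⁻¹ : ℝ)
  simp only [gw, pow_zero, one_mul]
  rw [this, show π / 2⁻¹ = 2 * π by ring]

lemma gw_int1 : ∫ x : ℝ, x ^ 1 * gw x = 0 := by
  have hderiv : ∀ x : ℝ, HasDerivAt (fun x : ℝ => -gw x) (x ^ 1 * gw x) x := by
    intro x
    have hg : HasDerivAt (fun x : ℝ => -(2⁻¹ : ℝ) * x ^ 2) (-(2⁻¹ : ℝ) * (2 * x ^ 1)) x :=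
      (hasDerivAt_pow 2 x).const_mul (-(2⁻¹ : ℝ))
    have h2 : HasDerivAt gw (Real.exp (-(2⁻¹ : ℝ) * x ^ 2) * (-(2⁻¹ : ℝ) * (2 * x ^ 1))) x :=
      (Real.hasDerivAt_exp _).comp x hg
    have : HasDerivAt (fun x : ℝ => -gw x) _ x := h2.neg
    convert this using 1
    simp [gw]; ring
  have h0 := integral_of_hasDerivAt_of_tendsto (f := fun x : ℝ => -gw x)
    hderiv (integrable_pow_gw 1)
    (by simpa using (tendsto_pow_gw_atBot 0).neg)
    (by simpa using (tendsto_pow_gw_atTop 0).neg)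
  simpa using h0

lemma gw_int2 : ∫ x : ℝ, x ^ 2 * gw x = Real.sqrt (2 * π) := by
  have := gauss_rec 0
  rw [gw_int0] at this; simpa using this

lemma gw_int3 : ∫ x : ℝ, x ^ 3 * gw x = 0 := by
  have := gauss_rec 1
  rw [gw_int1] at this; simpa using this

lemma gw_int4 : ∫ x : ℝ, x ^ 4 * gw x = 3 * Real.sqrt (2 * π) := by
  have := gauss_rec 2
  rw [gw_int2] at this; norm_num at this
  rw [Real.sqrt_mul (by norm_num : (0:ℝ) ≤ 2)]; linarith

lemma pdf_eq (x : ℝ) : gaussianPDFReal 0 1 x = (Real.sqrt (2 * π))⁻¹ * gw x := by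
  rw [gaussianPDFReal_def]
  simp only [NNReal.coe_one, mul_one, sub_zero]
  congr 2
  ring

noncomputable def sq2pi : ℝ := Real.sqrt (2 * π)

lemma sq2pi_pos : 0 < sq2pi := Real.sqrt_pos.mpr (by positivity)

lemma gauss_integral_eq (f : ℝ → ℝ) :
    ∫ x, f x ∂(gaussianReal 0 1) = ∫ x, gaussianPDFReal 0 1 x * f x := by
  rw [gaussianReal_of_var_ne_zero 0 one_ne_zero]
  have hmeas : Measurable (fun x => (gaussianPDFReal 0 1 x).toNNReal) :=
    (measurable_gaussianPDFReal 0 1).real_toNNReal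
  have : (gaussianPDF 0 1) = fun x => ((fun x => (gaussianPDFReal 0 1 x).toNNReal) x : ENNReal) := by
    funext x; rfl
  rw [this, integral_withDensity_eq_integral_smul hmeas]
  congr 1; funext x
  simp [NNReal.smul_def, Real.coe_toNNReal _ (gaussianPDFReal_nonneg 0 1 x)]

lemma gauss_integrable_pow (m : ℕ) :
    Integrable (fun x : ℝ => x ^ m) (gaussianReal 0 1) := by
  rw [gaussianReal_of_var_ne_zero 0 one_ne_zero]
  have hmeas : Measurable (fun x => (gaussianPDFReal 0 1 x).toNNReal) :=
    (measurable_gaussianPDFReal 0 1).real_toNNReal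
  have : (gaussianPDF 0 1) = fun x => ((fun x => (gaussianPDFReal 0 1 x).toNNReal) x : ENNReal) := by
    funext x; rfl
  rw [this, integrable_withDensity_iff_integrable_smul hmeas]
  have : (fun x : ℝ => ((gaussianPDFReal 0 1 x).toNNReal : ℝ) • x ^ m)
      = fun x => (sq2pi)⁻¹ * (x ^ m * gw x) := by
    funext x
    rw [smul_eq_mul, Real.coe_toNNReal _ (gaussianPDFReal_nonneg 0 1 x), pdf_eq]
    rw [sq2pi]
    ring
  rw [show (fun x : ℝ => ((gaussianPDFReal 0 1 x).toNNReal) • x ^ m)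
      = fun x => (sq2pi)⁻¹ * (x ^ m * gw x) from this]
  exact (integrable_pow_gw m).const_mul _

lemma gauss_mom (m : ℕ) :
    ∫ x, x ^ m ∂(gaussianReal 0 1) = (sq2pi)⁻¹ * ∫ x : ℝ, x ^ m * gw x := by
  rw [gauss_integral_eq]
  simp_rw [pdf_eq, sq2pi, mul_assoc, mul_comm (gw _)]
  rw [← integral_const_mul]

lemma gauss_mom0 : ∫ x, x ^ 0 ∂(gaussianReal 0 1) = 1 := by
  rw [gauss_mom, gw_int0]; exact inv_mul_cancel₀ sq2pi_pos.ne'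
lemma gauss_mom1 : ∫ x, x ^ 1 ∂(gaussianReal 0 1) = 0 := by rw [gauss_mom, gw_int1]; ring
lemma gauss_mom2 : ∫ x, x ^ 2 ∂(gaussianReal 0 1) = 1 := by
  rw [gauss_mom, gw_int2]; exact inv_mul_cancel₀ sq2pi_pos.ne'
lemma gauss_mom3 : ∫ x, x ^ 3 ∂(gaussianReal 0 1) = 0 := by rw [gauss_mom, gw_int3]; ring
lemma gauss_mom4 : ∫ x, x ^ 4 ∂(gaussianReal 0 1) = 3 := by
  rw [gauss_mom, gw_int4, show Real.sqrt (2 * π) = sq2pi from rfl]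
  rw [mul_comm (3:ℝ) sq2pi, ← mul_assoc, inv_mul_cancel₀ sq2pi_pos.ne', one_mul]

lemma bern_integral {θ : ℝ} (hθ0 : 0 ≤ θ) (hθ1 : θ ≤ 1) (f : ℝ → ℝ) :
    ∫ x, f x ∂(ENNReal.ofReal (1 - θ) • Measure.dirac (0 : ℝ) + ENNReal.ofReal θ • Measure.dirac 1)
      = (1 - θ) * f 0 + θ * f 1 := by
  have h0 : Integrable f (Measure.dirac (0 : ℝ)) :=
    (integrable_const (f 0)).congr (ae_eq_dirac f).symm
  have h1 : Integrable f (Measure.dirac (1 : ℝ)) :=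
    (integrable_const (f 1)).congr (ae_eq_dirac f).symm
  rw [integral_add_measure (h0.smul_measure ENNReal.ofReal_ne_top)
    (h1.smul_measure ENNReal.ofReal_ne_top),
    integral_smul_measure, integral_smul_measure, integral_dirac, integral_dirac,
    ENNReal.toReal_ofReal (by linarith), ENNReal.toReal_ofReal hθ0, smul_eq_mul, smul_eq_mul]

lemma iIndepFun_ae_eq {Ω : Type*} [MeasurableSpace Ω] {μ : Measure Ω} {ι : Type*} [Countable ι]
    {β : ι → Type*} {m : ∀ i, MeasurableSpace (β i)} {f g : ∀ i, Ω → β i}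
    (hf : iIndepFun (m := m) f μ) (h : ∀ i, f i =ᵐ[μ] g i) : iIndepFun (m := m) g μ := by
  rw [iIndepFun_iff_measure_inter_preimage_eq_mul] at hf ⊢
  intro S sets hmeas
  have hpre : ∀ i, f i ⁻¹' sets i =ᵐ[μ] g i ⁻¹' sets i := fun i => (h i).fun_comp (· ∈ sets i)
  have hset : (⋂ i ∈ S, f i ⁻¹' sets i) =ᵐ[μ] (⋂ i ∈ S, g i ⁻¹' sets i) := by
    filter_upwards [(ae_ball_iff S.countable_toSet).2 (fun i _ => h i)] with ω hω
    show (ω ∈ ⋂ i ∈ S, f i ⁻¹' sets i) = (ω ∈ ⋂ i ∈ S, g i ⁻¹' sets i)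
    simp only [Set.mem_iInter, Set.mem_preimage, eq_iff_iff]
    constructor <;> intro hh i hi
    · rw [← hω i hi]; exact hh i hi
    · rw [hω i hi]; exact hh i hi
  rw [← measure_congr hset, hf S hmeas]
  exact Finset.prod_congr rfl fun i _ => measure_congr (hpre i)

lemma indep_prod_integral {Ω : Type*} [MeasurableSpace Ω] {μ : Measure Ω} [IsProbabilityMeasure μ]
    {ι : Type*} {Z : ι → Ω → ℝ}
    (hZ : iIndepFun Z μ)
    (hmeas : ∀ i, Measurable (Z i)) (hint : ∀ i, Integrable (Z i) μ) (s : Finset ι) :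
    Integrable (fun ω => ∏ i ∈ s, Z i ω) μ ∧
      ∫ ω, ∏ i ∈ s, Z i ω ∂μ = ∏ i ∈ s, ∫ ω, Z i ω ∂μ := by
  classical
  induction s using Finset.cons_induction with
  | empty => simp
  | cons i s hi ih =>
    have hindep : IndepFun (∏ j ∈ s, Z j) (Z i) μ :=
      hZ.indepFun_finsetProd_of_notMem hmeas hi
    have hprodmeas : Measurable (∏ j ∈ s, Z j) := by
      rw [Finset.prod_fn]
      exact Finset.measurable_prod s (fun j _ => hmeas j)
    have hintprod : Integrable (∏ j ∈ s, Z j) μ := by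
      have := ih.1
      refine this.congr (Filter.Eventually.of_forall fun ω => ?_)
      simp [Finset.prod_apply]
    constructor
    · have h2 := hindep.integrable_mul hintprod (hint i)
      refine h2.congr (Filter.Eventually.of_forall fun ω => ?_)
      simp [Finset.prod_apply, Finset.prod_cons, Finset.prod_insert hi, mul_comm, mul_left_comm]
    · have h2 := hindep.integral_mul_eq_mul_integral hprodmeas.aestronglyMeasurable (hmeas i).aestronglyMeasurable
      have e1 : ∫ ω, ∏ j ∈ Finset.cons i s hi, Z j ω ∂μ
          = ∫ ω, (∏ j ∈ s, Z j) ω * Z i ω ∂μ := by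
        congr 1; funext ω
        simp [Finset.prod_cons, Finset.prod_apply, Finset.prod_insert hi, mul_comm, mul_left_comm]
      rw [e1, show (fun ω => (∏ j ∈ s, Z j) ω * Z i ω) = (∏ j ∈ s, Z j) * Z i from rfl, h2]
      rw [Finset.prod_cons, ← ih.2]
      have : ∫ ω, (∏ j ∈ s, Z j) ω ∂μ = ∫ ω, ∏ j ∈ s, Z j ω ∂μ := by
        congr 1; funext ω; simp [Finset.prod_apply]
      rw [this]; ring

variable {n : ℕ}

lemma prod_support (e : ℕ → ℝ) (he : e 0 = 1) (f : Fin n → ℕ) (s : Finset (Fin n))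
    (h : ∀ l ∉ s, f l = 0) : ∏ l, e (f l) = ∏ l ∈ s, e (f l) :=
  (Finset.prod_subset s.subset_univ (fun l _ hl => by rw [h l hl, he])).symm

lemma prodP1 (e : ℕ → ℝ) (he : e 0 = 1) (p : Fin n) (k : ℕ) :
    ∏ l, e (if p = l then k else 0) = e k := by
  rw [Finset.prod_eq_single p (fun l _ hl => by rw [if_neg fun h => hl h.symm, he])
    (fun h => absurd (Finset.mem_univ p) h), if_pos rfl]

lemma prodP2 (e : ℕ → ℝ) (he : e 0 = 1) {p q : Fin n} (hpq : p ≠ q) (k1 k2 : ℕ) :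
    ∏ l, e ((if p = l then k1 else 0) + (if q = l then k2 else 0)) = e k1 * e k2 := by
  rw [prod_support e he _ {p, q} ?_]
  · rw [Finset.prod_insert (by simp [hpq]), Finset.prod_singleton]
    simp [hpq, Ne.symm hpq]
  · intro l hl
    simp only [Finset.mem_insert, Finset.mem_singleton] at hl
    push_neg at hl
    rw [if_neg fun h => hl.1 h.symm, if_neg fun h => hl.2 h.symm]

lemma prodP3 (e : ℕ → ℝ) (he : e 0 = 1) {p q r : Fin n} (hpq : p ≠ q) (hpr : p ≠ r)
    (hqr : q ≠ r) (k1 k2 k3 : ℕ) :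
    ∏ l, e ((if p = l then k1 else 0) + (if q = l then k2 else 0) + (if r = l then k3 else 0))
      = e k1 * e k2 * e k3 := by
  rw [prod_support e he _ {p, q, r} ?_]
  · rw [Finset.prod_insert (by simp [hpq, hpr]), Finset.prod_insert (by simp [hqr]),
      Finset.prod_singleton]
    simp [hpq, hpr, hqr, Ne.symm hpq, Ne.symm hpr, Ne.symm hqr, mul_assoc]
  · intro l hl
    simp only [Finset.mem_insert, Finset.mem_singleton] at hl
    push_neg at hl
    rw [if_neg fun h => hl.1 h.symm, if_neg fun h => hl.2.1 h.symm,
      if_neg fun h => hl.2.2 h.symm]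

lemma prodP4 (e : ℕ → ℝ) (he : e 0 = 1) {p q r t : Fin n} (hpq : p ≠ q) (hpr : p ≠ r)
    (hpt : p ≠ t) (hqr : q ≠ r) (hqt : q ≠ t) (hrt : r ≠ t) (k1 k2 k3 k4 : ℕ) :
    ∏ l, e ((if p = l then k1 else 0) + (if q = l then k2 else 0) + (if r = l then k3 else 0)
      + (if t = l then k4 else 0)) = e k1 * e k2 * e k3 * e k4 := by
  rw [prod_support e he _ {p, q, r, t} ?_]
  · rw [Finset.prod_insert (by simp [hpq, hpr, hpt]), Finset.prod_insert (by simp [hqr, hqt]),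
      Finset.prod_insert (by simp [hrt]), Finset.prod_singleton]
    simp [hpq, hpr, hpt, hqr, hqt, hrt, Ne.symm hpq, Ne.symm hpr, Ne.symm hpt, Ne.symm hqr,
      Ne.symm hqt, Ne.symm hrt, mul_assoc]
  · intro l hl
    simp only [Finset.mem_insert, Finset.mem_singleton] at hl
    push_neg at hl
    rw [if_neg fun h => hl.1 h.symm, if_neg fun h => hl.2.1 h.symm,
      if_neg fun h => hl.2.2.1 h.symm, if_neg fun h => hl.2.2.2 h.symm]

lemma comb (θ : ℝ) (e : ℕ → ℝ) (he0 : e 0 = 1) (he1 : e 1 = 0) (he2 : e 2 = θ)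
    (he3 : e 3 = 0) (he4 : e 4 = 3 * θ) (a b c j : Fin n) :
    (∏ l, e ((if a = l then 1 else 0) + (if b = l then 1 else 0) + (if c = l then 1 else 0)
      + (if j = l then 1 else 0)))
    = θ ^ 2 * (((if a = b then (1:ℝ) else 0) * (if c = j then 1 else 0))
        + ((if a = c then (1:ℝ) else 0) * (if b = j then 1 else 0))
        + ((if b = c then (1:ℝ) else 0) * (if a = j then 1 else 0)))
      + 3 * θ * (1 - θ) * (if a = b ∧ a = c ∧ a = j then 1 else 0) := by
  by_cases hab : a = b
  · subst hab
    by_cases hac : a = c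
    · subst hac
      by_cases haj : a = j
      · subst haj
        simp only [show ∀ l : Fin n, ((if a = l then 1 else 0) + (if a = l then 1 else 0)
            + (if a = l then 1 else 0) + (if a = l then 1 else 0)) = (if a = l then 4 else 0)
          from fun l => by split_ifs <;> rfl]
        rw [prodP1 e he0, he4]
        simp; ring
      · simp only [show ∀ l : Fin n, ((if a = l then 1 else 0) + (if a = l then 1 else 0)
            + (if a = l then 1 else 0) + (if j = l then 1 else 0))
            = ((if a = l then 3 else 0) + (if j = l then 1 else 0))
          from fun l => by split_ifs <;> rfl]
        rw [prodP2 e he0 haj, he3, he1]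
        simp [haj]
    · by_cases hcj : c = j
      · subst hcj
        simp only [show ∀ l : Fin n, ((if a = l then 1 else 0) + (if a = l then 1 else 0)
            + (if c = l then 1 else 0) + (if c = l then 1 else 0))
            = ((if a = l then 2 else 0) + (if c = l then 2 else 0))
          from fun l => by split_ifs <;> rfl]
        rw [prodP2 e he0 hac, he2]
        simp [hac]; ring
      · by_cases haj : a = j
        · subst haj
          simp only [show ∀ l : Fin n, ((if a = l then 1 else 0) + (if a = l then 1 else 0)
              + (if c = l then 1 else 0) + (if a = l then 1 else 0))
              = ((if a = l then 3 else 0) + (if c = l then 1 else 0))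
            from fun l => by split_ifs <;> rfl]
          rw [prodP2 e he0 hac, he3, he1]
          simp [hac, Ne.symm hac]
        · simp only [show ∀ l : Fin n, ((if a = l then 1 else 0) + (if a = l then 1 else 0)
              + (if c = l then 1 else 0) + (if j = l then 1 else 0))
              = ((if a = l then 2 else 0) + (if c = l then 1 else 0) + (if j = l then 1 else 0))
            from fun l => by split_ifs <;> rfl]
          rw [prodP3 e he0 hac haj hcj, he2, he1]
          simp [hac, haj, hcj]
  · by_cases hac : a = c
    · subst hac
      by_cases hbj : b = j
      · subst hbj
        simp only [show ∀ l : Fin n, ((if a = l then 1 else 0) + (if b = l then 1 else 0)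
            + (if a = l then 1 else 0) + (if b = l then 1 else 0))
            = ((if a = l then 2 else 0) + (if b = l then 2 else 0))
          from fun l => by split_ifs <;> rfl]
        rw [prodP2 e he0 hab, he2]
        simp [hab]; ring
      · by_cases haj : a = j
        · subst haj
          simp only [show ∀ l : Fin n, ((if a = l then 1 else 0) + (if b = l then 1 else 0)
              + (if a = l then 1 else 0) + (if a = l then 1 else 0))
              = ((if a = l then 3 else 0) + (if b = l then 1 else 0))
            from fun l => by split_ifs <;> rfl]
          rw [prodP2 e he0 hab, he3, he1]
          simp [hab, hbj]
        · simp only [show ∀ l : Fin n, ((if a = l then 1 else 0) + (if b = l then 1 else 0)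
              + (if a = l then 1 else 0) + (if j = l then 1 else 0))
              = ((if a = l then 2 else 0) + (if b = l then 1 else 0) + (if j = l then 1 else 0))
            from fun l => by split_ifs <;> rfl]
          rw [prodP3 e he0 hab haj hbj, he2, he1]
          simp [hab, haj, hbj]
    · by_cases hbc : b = c
      · subst hbc
        by_cases haj : a = j
        · subst haj
          simp only [show ∀ l : Fin n, ((if a = l then 1 else 0) + (if b = l then 1 else 0)
              + (if b = l then 1 else 0) + (if a = l then 1 else 0))
              = ((if a = l then 2 else 0) + (if b = l then 2 else 0))
            from fun l => by split_ifs <;> rfl]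
          rw [prodP2 e he0 hab, he2]
          simp [hab, hac]; ring
        · by_cases hbj : b = j
          · subst hbj
            simp only [show ∀ l : Fin n, ((if a = l then 1 else 0) + (if b = l then 1 else 0)
                + (if b = l then 1 else 0) + (if b = l then 1 else 0))
                = ((if a = l then 1 else 0) + (if b = l then 3 else 0))
              from fun l => by split_ifs <;> rfl]
            rw [prodP2 e he0 hab, he3, he1]
            simp [hab, hac, haj]
          · simp only [show ∀ l : Fin n, ((if a = l then 1 else 0) + (if b = l then 1 else 0)
                + (if b = l then 1 else 0) + (if j = l then 1 else 0))
                = ((if a = l then 1 else 0) + (if b = l then 2 else 0) + (if j = l then 1 else 0))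
              from fun l => by split_ifs <;> rfl]
            rw [prodP3 e he0 hab haj hbj, he2, he1]
            simp [hab, hac, haj, hbj]
      · by_cases hcj : c = j
        · subst hcj
          simp only [show ∀ l : Fin n, ((if a = l then 1 else 0) + (if b = l then 1 else 0)
              + (if c = l then 1 else 0) + (if c = l then 1 else 0))
              = ((if a = l then 1 else 0) + (if b = l then 1 else 0) + (if c = l then 2 else 0))
            from fun l => by split_ifs <;> rfl]
          rw [prodP3 e he0 hab hac hbc, he2, he1]
          simp [hab, hac, hbc]
        · by_cases haj : a = j
          · subst haj
            simp only [show ∀ l : Fin n, ((if a = l then 1 else 0) + (if b = l then 1 else 0)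
                + (if c = l then 1 else 0) + (if a = l then 1 else 0))
                = ((if a = l then 2 else 0) + (if b = l then 1 else 0) + (if c = l then 1 else 0))
              from fun l => by split_ifs <;> rfl]
            rw [prodP3 e he0 hab hac hbc, he2, he1]
            simp [hab, hac, hbc, hcj]
          · by_cases hbj : b = j
            · subst hbj
              simp only [show ∀ l : Fin n, ((if a = l then 1 else 0) + (if b = l then 1 else 0)
                  + (if c = l then 1 else 0) + (if b = l then 1 else 0))
                  = ((if a = l then 1 else 0) + (if b = l then 2 else 0) + (if c = l then 1 else 0))
                from fun l => by split_ifs <;> rfl]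
              rw [prodP3 e he0 hab hac hbc, he2, he1]
              simp [hab, hac, hbc, haj, hcj]
            · rw [prodP4 e he0 hab hac haj hbc hbj hcj, he1]
              simp [hab, hac, hbc, haj, hbj, hcj]


variable {n : ℕ}

lemma prod_pow_ind (f : Fin n → ℝ) (p : Fin n) :
    (∏ l, f l ^ (if p = l then 1 else 0)) = f p := by
  calc ∏ l, f l ^ (if p = l then 1 else 0) = ∏ l, (if p = l then f l else 1) :=
        Finset.prod_congr rfl fun l _ => by split <;> simp
    _ = f p := by rw [Finset.prod_ite_eq]; simp

section main
variable {Ωs : Type*} [MeasurableSpace Ωs] (μ : Measure Ωs) [IsProbabilityMeasure μ]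
  (θ : ℝ) (B V : Fin n → Ωs → ℝ)

/-- moments of a Bernoulli coordinate -/
lemma B_moment (hθ : θ ∈ Set.Ioo (0:ℝ) 1) (l : Fin n) (hm : Measurable (B l))
    (hBl : Measure.map (B l) μ
      = ENNReal.ofReal (1 - θ) • Measure.dirac (0 : ℝ) + ENNReal.ofReal θ • Measure.dirac 1)
    (m : ℕ) :
    ∫ ω, B l ω ^ m ∂μ = if m = 0 then 1 else θ := by
  have h := integral_map (μ := μ) (f := fun x : ℝ => x ^ m) hm.aemeasurable
    ((measurable_id.pow_const m)).aestronglyMeasurable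
  rw [← h, hBl, bern_integral hθ.1.le hθ.2.le]
  cases m with
  | zero => norm_num
  | succ k => simp [zero_pow (Nat.succ_ne_zero k)]

lemma B_ae01 (l : Fin n) (hm : Measurable (B l))
    (hBl : Measure.map (B l) μ
      = ENNReal.ofReal (1 - θ) • Measure.dirac (0 : ℝ) + ENNReal.ofReal θ • Measure.dirac 1) :
    ∀ᵐ ω ∂μ, B l ω = 0 ∨ B l ω = 1 := by
  have hs : MeasurableSet ({0, 1} : Set ℝ)ᶜ :=
    (((measurableSet_singleton (1:ℝ)).insert 0)).compl
  have hmap : Measure.map (B l) μ (({0, 1} : Set ℝ)ᶜ) = 0 := by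
    rw [hBl]
    simp only [Measure.add_apply, Measure.smul_apply, smul_eq_mul]
    rw [Measure.dirac_apply' _ hs, Measure.dirac_apply' _ hs]
    simp [Set.indicator_of_notMem]
  rw [Measure.map_apply_of_aemeasurable hm.aemeasurable hs] at hmap
  have : ∀ᵐ ω ∂μ, B l ω ∈ ({0, 1} : Set ℝ) := by
    rw [ae_iff]
    convert hmap using 2
    rfl
  filter_upwards [this] with ω hω
  simpa using hω

lemma B_pow_int (hθ : θ ∈ Set.Ioo (0:ℝ) 1) (l : Fin n) (hm : Measurable (B l))
    (hBl : Measure.map (B l) μ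
      = ENNReal.ofReal (1 - θ) • Measure.dirac (0 : ℝ) + ENNReal.ofReal θ • Measure.dirac 1)
    (m : ℕ) : Integrable (fun ω => B l ω ^ m) μ := by
  refine Integrable.mono' (integrable_const (1:ℝ)) ((hm.pow_const m).aestronglyMeasurable) ?_
  filter_upwards [B_ae01 μ θ B l hm hBl] with ω hω
  rcases hω with h | h <;> rcases Nat.eq_zero_or_pos m with h0 | h0 <;> simp [h, h0]
  · rw [zero_pow h0.ne']; norm_num

lemma V_moment (l : Fin n) (hm : Measurable (V l))
    (hVl : Measure.map (V l) μ = gaussianReal 0 1) (m : ℕ) :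
    ∫ ω, V l ω ^ m ∂μ = ∫ x, x ^ m ∂(gaussianReal 0 1) := by
  have h := integral_map (μ := μ) (f := fun x : ℝ => x ^ m) hm.aemeasurable
    ((measurable_id.pow_const m)).aestronglyMeasurable
  rw [← h, hVl]

lemma V_pow_int (l : Fin n) (hm : Measurable (V l))
    (hVl : Measure.map (V l) μ = gaussianReal 0 1) (m : ℕ) :
    Integrable (fun ω => V l ω ^ m) μ := by
  have h := (integrable_map_measure (μ := μ) (f := V l) (g := fun x : ℝ => x ^ m)
    (((measurable_id.pow_const m)).aestronglyMeasurable) hm.aemeasurable)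
  rw [hVl] at h
  exact h.mp (gauss_integrable_pow m)

/-- The key moment computation for products of four Bernoulli-Gaussian coordinates. -/
lemma main_meas (hθ : θ ∈ Set.Ioo (0:ℝ) 1)
    (hBm : ∀ i, Measurable (B i)) (hVm : ∀ i, Measurable (V i))
    (hindep : iIndepFun (Sum.elim B V) μ)
    (hB : ∀ i, Measure.map (B i) μ
      = ENNReal.ofReal (1 - θ) • Measure.dirac (0 : ℝ) + ENNReal.ofReal θ • Measure.dirac 1)
    (hV : ∀ i, Measure.map (V i) μ = gaussianReal 0 1)
    (a b c j : Fin n) :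
    Integrable (fun ω => (B a ω * V a ω) * (B b ω * V b ω) * (B c ω * V c ω)
        * (B j ω * V j ω)) μ ∧
      ∫ ω, (B a ω * V a ω) * (B b ω * V b ω) * (B c ω * V c ω) * (B j ω * V j ω) ∂μ
        = θ ^ 2 * (((if a = b then (1:ℝ) else 0) * (if c = j then 1 else 0))
            + ((if a = c then (1:ℝ) else 0) * (if b = j then 1 else 0))
            + ((if b = c then (1:ℝ) else 0) * (if a = j then 1 else 0)))
          + 3 * θ * (1 - θ) * (if a = b ∧ a = c ∧ a = j then 1 else 0) := by
  classical
  set m : Fin n → ℕ := fun l => (if a = l then 1 else 0) + (if b = l then 1 else 0)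
    + (if c = l then 1 else 0) + (if j = l then 1 else 0) with hm_def
  set Zf : (Fin n ⊕ Fin n) → Ωs → ℝ :=
    Sum.elim (fun l ω => B l ω ^ m l) (fun l ω => V l ω ^ m l) with hZf_def
  have hZindep : iIndepFun Zf μ := by
    have := hindep.comp (fun s => fun x : ℝ => x ^ (Sum.elim m m s))
      (fun s => (measurable_id.pow_const _))
    convert this using 1
    funext s; cases s <;> rfl
  have hZmeas : ∀ s, Measurable (Zf s) := by
    rintro (l | l)
    · exact (hBm l).pow_const _
    · exact (hVm l).pow_const _
  have hZint : ∀ s, Integrable (Zf s) μ := by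
    rintro (l | l)
    · exact B_pow_int μ θ B hθ l (hBm l) (hB l) _
    · exact V_pow_int μ V l (hVm l) (hV l) _
  obtain ⟨hint, hval⟩ := indep_prod_integral hZindep hZmeas hZint Finset.univ
  -- identify the product over the sum type with the target function
  have hprod_eq : ∀ ω, (∏ s, Zf s ω)
      = (B a ω * V a ω) * (B b ω * V b ω) * (B c ω * V c ω) * (B j ω * V j ω) := by
    intro ω
    rw [Fintype.prod_sum_type]
    have h1 : (∏ l, B l ω ^ m l) * (∏ l, V l ω ^ m l)
        = ∏ l, (B l ω * V l ω) ^ m l := by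
      rw [← Finset.prod_mul_distrib]
      exact Finset.prod_congr rfl fun l _ => (mul_pow _ _ _).symm
    calc (∏ l, Zf (Sum.inl l) ω) * (∏ l, Zf (Sum.inr l) ω)
        = (∏ l, B l ω ^ m l) * (∏ l, V l ω ^ m l) := rfl
      _ = ∏ l, (B l ω * V l ω) ^ m l := h1
      _ = (B a ω * V a ω) * (B b ω * V b ω) * (B c ω * V c ω) * (B j ω * V j ω) := by
          simp only [hm_def, pow_add, Finset.prod_mul_distrib, prod_pow_ind]
  constructor
  · exact hint.congr (Filter.Eventually.of_forall fun ω => hprod_eq ω)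
  · have hL : ∫ ω, (B a ω * V a ω) * (B b ω * V b ω) * (B c ω * V c ω) * (B j ω * V j ω) ∂μ
        = ∫ ω, ∏ s, Zf s ω ∂μ := integral_congr_ae
          (Filter.Eventually.of_forall fun ω => (hprod_eq ω).symm)
    rw [hL, hval, Fintype.prod_sum_type]
    have hBval : ∀ l, ∫ ω, Zf (Sum.inl l) ω ∂μ = (if m l = 0 then 1 else θ) := fun l =>
      B_moment μ θ B hθ l (hBm l) (hB l) (m l)
    have hVval : ∀ l, ∫ ω, Zf (Sum.inr l) ω ∂μ = ∫ x, x ^ (m l) ∂(gaussianReal 0 1) := fun l =>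
      V_moment μ V l (hVm l) (hV l) (m l)
    simp only [hBval, hVval]
    rw [← Finset.prod_mul_distrib]
    have := comb θ (fun mm => (if mm = 0 then (1:ℝ) else θ) * ∫ x, x ^ mm ∂(gaussianReal 0 1))
      (by beta_reduce; rw [if_pos rfl, gauss_mom0, mul_one])
      (by beta_reduce; rw [if_neg one_ne_zero, gauss_mom1, mul_zero])
      (by beta_reduce; rw [if_neg two_ne_zero, gauss_mom2, mul_one])
      (by beta_reduce; rw [if_neg three_ne_zero, gauss_mom3, mul_zero])
      (by beta_reduce; rw [if_neg four_ne_zero, gauss_mom4, mul_comm]) a b c j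
    exact this
end main



variable {n : ℕ}

lemma pick (f : Fin n → ℝ) (p : Fin n) :
    ∑ x, f x * (if p = x then (1:ℝ) else 0) = f p := by
  rw [Finset.sum_eq_single p (fun x _ hx => by rw [if_neg fun h => hx h.symm, mul_zero])
    (fun h => absurd (Finset.mem_univ p) h), if_pos rfl, mul_one]

lemma pick' (f : Fin n → ℝ) (p : Fin n) :
    ∑ x, f x * (if x = p then (1:ℝ) else 0) = f p := by
  rw [Finset.sum_eq_single p (fun x _ hx => by rw [if_neg hx, mul_zero])
    (fun h => absurd (Finset.mem_univ p) h), if_pos rfl, mul_one]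

lemma main_comp {Ωs : Type*} [MeasurableSpace Ωs] (μ : Measure Ωs) [IsProbabilityMeasure μ]
    (θ : ℝ) (B V : Fin n → Ωs → ℝ) (hθ : θ ∈ Set.Ioo (0:ℝ) 1)
    (hBm : ∀ i, Measurable (B i)) (hVm : ∀ i, Measurable (V i))
    (hindep : iIndepFun (Sum.elim B V) μ)
    (hB : ∀ i, Measure.map (B i) μ
      = ENNReal.ofReal (1 - θ) • Measure.dirac (0 : ℝ) + ENNReal.ofReal θ • Measure.dirac 1)
    (hV : ∀ i, Measure.map (V i) μ = gaussianReal 0 1)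
    (W : Matrix (Fin n) (Fin n) ℝ) (hW : Wᵀ * W = 1) (i j : Fin n) :
    ∫ ω, (W.mulVec (fun l => B l ω * V l ω) i) ^ 3 * (B j ω * V j ω) ∂μ
      = 3 * θ * (1 - θ) * cube W i j + 3 * θ ^ 2 * W i j := by
  classical
  have hrow : ∑ l, W i l * W i l = 1 := by
    have h1 : W * Wᵀ = 1 := mul_eq_one_comm.mp hW
    have h2 := congrArg (fun M => M i i) h1
    simpa [Matrix.mul_apply, Matrix.one_apply] using h2
  have hexp : ∀ ω, (W.mulVec (fun l => B l ω * V l ω) i) ^ 3 * (B j ω * V j ω)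
      = ∑ a, ∑ b, ∑ c, (W i a * W i b * W i c)
          * ((B a ω * V a ω) * (B b ω * V b ω) * (B c ω * V c ω) * (B j ω * V j ω)) := by
    intro ω
    rw [show W.mulVec (fun l => B l ω * V l ω) i = ∑ l, W i l * (B l ω * V l ω) from by
      simp [Matrix.mulVec, dotProduct]]
    rw [pow_succ, pow_succ, pow_one]
    simp only [Finset.sum_mul, Finset.mul_sum]
    refine Finset.sum_congr rfl fun a _ => ?_
    refine Finset.sum_congr rfl fun b _ => ?_
    refine Finset.sum_congr rfl fun c _ => ?_
    ring
  have hMM := fun a b c => main_meas μ θ B V hθ hBm hVm hindep hB hV a b c j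
  have hIntTerm : ∀ a b c : Fin n, Integrable (fun ω => (W i a * W i b * W i c)
      * ((B a ω * V a ω) * (B b ω * V b ω) * (B c ω * V c ω) * (B j ω * V j ω))) μ :=
    fun a b c => ((hMM a b c).1).const_mul _
  have hsplit : ∀ a b c : Fin n, (if a = b ∧ a = c ∧ a = j then (1:ℝ) else 0)
      = (if a = b then (1:ℝ) else 0) * ((if a = c then (1:ℝ) else 0)
        * (if a = j then (1:ℝ) else 0)) := by
    intro a b c
    simp only [ite_and, ite_mul, zero_mul, one_mul]
  calc ∫ ω, (W.mulVec (fun l => B l ω * V l ω) i) ^ 3 * (B j ω * V j ω) ∂μ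
      = ∫ ω, ∑ a, ∑ b, ∑ c, (W i a * W i b * W i c)
          * ((B a ω * V a ω) * (B b ω * V b ω) * (B c ω * V c ω) * (B j ω * V j ω)) ∂μ :=
        integral_congr_ae (Filter.Eventually.of_forall fun ω => hexp ω)
    _ = ∑ a, ∑ b, ∑ c, (W i a * W i b * W i c)
          * (θ ^ 2 * (((if a = b then (1:ℝ) else 0) * (if c = j then 1 else 0))
            + ((if a = c then (1:ℝ) else 0) * (if b = j then 1 else 0))
            + ((if b = c then (1:ℝ) else 0) * (if a = j then 1 else 0)))
          + 3 * θ * (1 - θ) * (if a = b ∧ a = c ∧ a = j then 1 else 0)) := by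
        rw [integral_finset_sum _ (fun a _ => integrable_finset_sum _ (fun b _ =>
          integrable_finset_sum _ (fun c _ => hIntTerm a b c)))]
        refine Finset.sum_congr rfl fun a _ => ?_
        rw [integral_finset_sum _ (fun b _ => integrable_finset_sum _ (fun c _ => hIntTerm a b c))]
        refine Finset.sum_congr rfl fun b _ => ?_
        rw [integral_finset_sum _ (fun c _ => hIntTerm a b c)]
        refine Finset.sum_congr rfl fun c _ => ?_
        rw [integral_const_mul, (hMM a b c).2]
    _ = 3 * θ * (1 - θ) * cube W i j + 3 * θ ^ 2 * W i j := by
        have hd1 : ∀ a b c : Fin n, (W i a * W i b * W i c)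
            * (θ ^ 2 * (((if a = b then (1:ℝ) else 0) * (if c = j then 1 else 0))
              + ((if a = c then (1:ℝ) else 0) * (if b = j then 1 else 0))
              + ((if b = c then (1:ℝ) else 0) * (if a = j then 1 else 0)))
            + 3 * θ * (1 - θ) * (if a = b ∧ a = c ∧ a = j then 1 else 0))
            = (θ ^ 2 * (if a = b then (1:ℝ) else 0) * (W i a * W i b) * W i c)
                * (if c = j then 1 else 0)
              + ((θ ^ 2 * (if b = j then (1:ℝ) else 0) * (W i a * W i b) * W i c)
                * (if a = c then 1 else 0)
              + ((θ ^ 2 * (if a = j then (1:ℝ) else 0) * (W i a * W i b) * W i c)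
                * (if b = c then 1 else 0)
              + (3 * θ * (1 - θ) * (if a = b then (1:ℝ) else 0) * (if a = j then (1:ℝ) else 0)
                  * (W i a * W i b) * W i c) * (if a = c then 1 else 0))) := by
          intro a b c
          rw [hsplit a b c]; ring
        have hc : ∀ a b : Fin n, (∑ c, (W i a * W i b * W i c)
            * (θ ^ 2 * (((if a = b then (1:ℝ) else 0) * (if c = j then 1 else 0))
              + ((if a = c then (1:ℝ) else 0) * (if b = j then 1 else 0))
              + ((if b = c then (1:ℝ) else 0) * (if a = j then 1 else 0)))
            + 3 * θ * (1 - θ) * (if a = b ∧ a = c ∧ a = j then 1 else 0)))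
            = θ ^ 2 * (if a = b then (1:ℝ) else 0) * (W i a * W i b) * W i j
              + θ ^ 2 * (if b = j then (1:ℝ) else 0) * (W i a * W i b) * W i a
              + θ ^ 2 * (if a = j then (1:ℝ) else 0) * (W i a * W i b) * W i b
              + 3 * θ * (1 - θ) * (if a = b then (1:ℝ) else 0) * (if a = j then (1:ℝ) else 0)
                  * (W i a * W i b) * W i a := by
          intro a b
          simp only [hd1]
          rw [Finset.sum_add_distrib, Finset.sum_add_distrib, Finset.sum_add_distrib,
            pick', pick, pick, pick]
          ring
        simp only [hc]
        have hd2 : ∀ a b : Fin n,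
            (θ ^ 2 * (if a = b then (1:ℝ) else 0) * (W i a * W i b) * W i j
              + θ ^ 2 * (if b = j then (1:ℝ) else 0) * (W i a * W i b) * W i a
              + θ ^ 2 * (if a = j then (1:ℝ) else 0) * (W i a * W i b) * W i b
              + 3 * θ * (1 - θ) * (if a = b then (1:ℝ) else 0) * (if a = j then (1:ℝ) else 0)
                  * (W i a * W i b) * W i a)
            = (θ ^ 2 * W i j * W i a * W i b) * (if a = b then (1:ℝ) else 0)
              + ((θ ^ 2 * W i a * (W i a * W i b)) * (if b = j then (1:ℝ) else 0)
              + ((θ ^ 2 * (if a = j then (1:ℝ) else 0) * W i a) * (W i b * W i b)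
              + (3 * θ * (1 - θ) * (if a = j then (1:ℝ) else 0) * (W i a * W i a) * W i b)
                * (if a = b then (1:ℝ) else 0))) := by
          intro a b; ring
        have hb : ∀ a : Fin n, (∑ b,
            (θ ^ 2 * (if a = b then (1:ℝ) else 0) * (W i a * W i b) * W i j
              + θ ^ 2 * (if b = j then (1:ℝ) else 0) * (W i a * W i b) * W i a
              + θ ^ 2 * (if a = j then (1:ℝ) else 0) * (W i a * W i b) * W i b
              + 3 * θ * (1 - θ) * (if a = b then (1:ℝ) else 0) * (if a = j then (1:ℝ) else 0)
                  * (W i a * W i b) * W i a))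
            = θ ^ 2 * W i j * (W i a * W i a)
              + θ ^ 2 * W i a * (W i a * W i j)
              + θ ^ 2 * (if a = j then (1:ℝ) else 0) * W i a
              + 3 * θ * (1 - θ) * (if a = j then (1:ℝ) else 0) * (W i a * W i a) * W i a := by
          intro a
          simp only [hd2]
          rw [Finset.sum_add_distrib, Finset.sum_add_distrib, Finset.sum_add_distrib,
            pick, pick', ← Finset.mul_sum, hrow, mul_one, pick]
          ring
        simp only [hb]
        have hd3 : ∀ a : Fin n,
            (θ ^ 2 * W i j * (W i a * W i a)
              + θ ^ 2 * W i a * (W i a * W i j)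
              + θ ^ 2 * (if a = j then (1:ℝ) else 0) * W i a
              + 3 * θ * (1 - θ) * (if a = j then (1:ℝ) else 0) * (W i a * W i a) * W i a)
            = (θ ^ 2 * W i j) * (W i a * W i a)
              + ((θ ^ 2 * W i j) * (W i a * W i a)
              + ((θ ^ 2 * W i a) * (if a = j then (1:ℝ) else 0)
              + (3 * θ * (1 - θ) * (W i a * (W i a * W i a))) * (if a = j then (1:ℝ) else 0))) := by
          intro a; ring
        simp only [hd3]
        rw [Finset.sum_add_distrib, Finset.sum_add_distrib, Finset.sum_add_distrib,
          ← Finset.mul_sum, hrow, mul_one, pick', pick']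
        simp only [cube]
        ring

end Aux

/-- Expectation of `(Wx)^{∘3} xᵀ` for a Bernoulli–Gaussian vector `x` and orthogonal `W`:
`E[(Wx)^{∘3} xᵀ] = 3θ(1-θ) W^{∘3} + 3θ² W`, entrywise. -/
theorem expectation_cubed_outer_bernoulli_gaussian
    {Ωs : Type*} [MeasurableSpace Ωs] (μ : Measure Ωs) [IsProbabilityMeasure μ]
    {n : ℕ} (θ : ℝ) (hθ : θ ∈ Set.Ioo (0 : ℝ) 1)
    (B V : Fin n → Ωs → ℝ)
    (hindep : iIndepFun (Sum.elim B V) μ)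
    (hB : ∀ i, Measure.map (B i) μ
      = ENNReal.ofReal (1 - θ) • Measure.dirac (0 : ℝ) + ENNReal.ofReal θ • Measure.dirac 1)
    (hV : ∀ i, Measure.map (V i) μ = gaussianReal 0 1)
    (W : Matrix (Fin n) (Fin n) ℝ) (hW : Wᵀ * W = 1) :
    ∀ i j, ∫ ω, (W.mulVec (fun l => B l ω * V l ω) i) ^ 3 * (B j ω * V j ω) ∂μ
      = 3 * θ * (1 - θ) * cube W i j + 3 * θ ^ 2 * W i j := by
  intro i j
  have hBae : ∀ l, AEMeasurable (B l) μ := by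
    intro l
    by_contra h
    have h0 : Measure.map (B l) μ = 0 := Measure.map_of_not_aemeasurable h
    rw [hB l] at h0
    have h1 := congrArg (fun ν : Measure ℝ => ν Set.univ) h0
    simp only [Measure.add_apply, Measure.smul_apply, smul_eq_mul, Measure.dirac_apply_of_mem
      (Set.mem_univ _), Measure.coe_zero, Pi.zero_apply, mul_one] at h1
    rw [← ENNReal.ofReal_add (by linarith [hθ.2]) (le_of_lt hθ.1)] at h1
    norm_num at h1
  have hVae : ∀ l, AEMeasurable (V l) μ := by
    intro l
    by_contra h
    have h0 : Measure.map (V l) μ = 0 := Measure.map_of_not_aemeasurable h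
    rw [hV l] at h0
    have h1 := congrArg (fun ν : Measure ℝ => ν Set.univ) h0
    simp [measure_univ] at h1
  set B' : Fin n → Ωs → ℝ := fun l => (hBae l).mk _ with hB'def
  set V' : Fin n → Ωs → ℝ := fun l => (hVae l).mk _ with hV'def
  have hB'm : ∀ l, Measurable (B' l) := fun l => (hBae l).measurable_mk
  have hV'm : ∀ l, Measurable (V' l) := fun l => (hVae l).measurable_mk
  have hB'ae : ∀ l, B l =ᵐ[μ] B' l := fun l => (hBae l).ae_eq_mk
  have hV'ae : ∀ l, V l =ᵐ[μ] V' l := fun l => (hVae l).ae_eq_mk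
  have hB' : ∀ l, Measure.map (B' l) μ
      = ENNReal.ofReal (1 - θ) • Measure.dirac (0 : ℝ) + ENNReal.ofReal θ • Measure.dirac 1 :=
    fun l => by rw [← Measure.map_congr (hB'ae l), hB l]
  have hV' : ∀ l, Measure.map (V' l) μ = gaussianReal 0 1 :=
    fun l => by rw [← Measure.map_congr (hV'ae l), hV l]
  have hindep' : iIndepFun (Sum.elim B' V') μ :=
    iIndepFun_ae_eq hindep (by rintro (l | l); exacts [hB'ae l, hV'ae l])
  have hae : ∀ᵐ ω ∂μ, (W.mulVec (fun l => B l ω * V l ω) i) ^ 3 * (B j ω * V j ω)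
      = (W.mulVec (fun l => B' l ω * V' l ω) i) ^ 3 * (B' j ω * V' j ω) := by
    have h1 : ∀ᵐ ω ∂μ, ∀ l, B l ω = B' l ω := ae_all_iff.2 hB'ae
    have h2 : ∀ᵐ ω ∂μ, ∀ l, V l ω = V' l ω := ae_all_iff.2 hV'ae
    filter_upwards [h1, h2] with ω e1 e2
    have : (fun l => B l ω * V l ω) = fun l => B' l ω * V' l ω := by
      funext l; rw [e1 l, e2 l]
    rw [this, e1 j, e2 j]
  rw [integral_congr_ae hae]
  exact main_comp μ θ B' V' hθ hB'm hV'm hindep' hB' hV' W hW i j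
end

section
/- The critical points of the function g(W) = ‖W‖₄⁴ on the manifold O(n,ℝ) are exactly the orthogonal matrices W satisfying (W^{∘3})ᵀ W = Wᵀ W^{∘3}, i.e., the matrix (W^{∘3})ᵀW is symmetric. -/
open Matrix Finset

/-- Critical points of `g(W) = ‖W‖₄⁴` on the orthogonal group: the Riemannian gradient
`grad g(W) = ∇g(W) - ½ W (Wᵀ ∇g(W) + ∇g(W)ᵀ W)`, with Euclidean gradient
`∇g(W) = 4 W^{∘3}`, vanishes at an orthogonal `W` if and only if
`(W^{∘3})ᵀ W = Wᵀ W^{∘3}`, i.e. `(W^{∘3})ᵀ W` is symmetric. -/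
theorem l4_critical_points_orthogonal {n : ℕ}
    (W : Matrix (Fin n) (Fin n) ℝ) (hW : Wᵀ * W = 1) :
    ((4 : ℝ) • cube W
        - (1 / 2 : ℝ) • (W * (Wᵀ * ((4 : ℝ) • cube W) + ((4 : ℝ) • cube W)ᵀ * W)) = 0)
      ↔ (cube W)ᵀ * W = Wᵀ * cube W := by
  have hW' : W * Wᵀ = 1 := mul_eq_one_comm.mp hW
  set C := cube W with hC
  have hgrad : (4 : ℝ) • C
      - (1 / 2 : ℝ) • (W * (Wᵀ * ((4 : ℝ) • C) + ((4 : ℝ) • C)ᵀ * W))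
      = (2 : ℝ) • C - (2 : ℝ) • (W * (Cᵀ * W)) := by
    rw [Matrix.transpose_smul]
    rw [Matrix.mul_smul, Matrix.smul_mul, Matrix.mul_add, Matrix.mul_smul,
      Matrix.mul_smul, smul_add, smul_smul, smul_smul]
    rw [← Matrix.mul_assoc, hW', Matrix.one_mul]
    module
  rw [hgrad]
  constructor
  · intro h
    have h2 : ((2:ℝ) • C - (2:ℝ) • (W * (Cᵀ * W))) * Wᵀ = 0 := by rw [h, Matrix.zero_mul]
    rw [Matrix.sub_mul, Matrix.smul_mul, Matrix.smul_mul, Matrix.mul_assoc,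
      Matrix.mul_assoc, hW', Matrix.mul_one, sub_eq_zero] at h2
    have h3 : C * Wᵀ = W * Cᵀ := by
      have := smul_right_injective (Matrix (Fin n) (Fin n) ℝ) (two_ne_zero (α := ℝ)) h2
      exact this
    calc Cᵀ * W = (Wᵀ * W) * (Cᵀ * W) := by rw [hW, Matrix.one_mul]
      _ = Wᵀ * (W * Cᵀ) * W := by rw [Matrix.mul_assoc, Matrix.mul_assoc, Matrix.mul_assoc]
      _ = Wᵀ * (C * Wᵀ) * W := by rw [h3]
      _ = Wᵀ * (C * (Wᵀ * W)) := by rw [Matrix.mul_assoc, Matrix.mul_assoc]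
      _ = Wᵀ * C := by rw [hW, Matrix.mul_one]
  · intro h
    have : W * (Cᵀ * W) = C := by
      rw [h, ← Matrix.mul_assoc, hW', Matrix.one_mul]
    rw [this, sub_self]
end

section
/- For any two orthogonal matrices W₁, W₂ ∈ O(n,ℝ), |‖W₁‖₄⁴ − ‖W₂‖₄⁴| ≤ 4n² ‖W₁ − W₂‖₂, where ‖·‖₂ is the spectral norm. -/
open Matrix Finset

/-- The spectral (ℓ²-operator) norm of a square real matrix. -/
noncomputable def specNorm {n : ℕ} (A : Matrix (Fin n) (Fin n) ℝ) : ℝ :=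
  ‖LinearMap.toContinuousLinearMap (Matrix.toEuclideanLin A)‖

lemma entry_le_specNorm {n : ℕ} (A : Matrix (Fin n) (Fin n) ℝ) (i j : Fin n) :
    |A i j| ≤ specNorm A := by
  set f := LinearMap.toContinuousLinearMap (Matrix.toEuclideanLin A)
  have h1 : ‖f (EuclideanSpace.single j (1:ℝ))‖ ≤ specNorm A := by
    calc ‖f (EuclideanSpace.single j (1:ℝ))‖ ≤ ‖f‖ * ‖EuclideanSpace.single j (1:ℝ)‖ :=
          f.le_opNorm _
      _ = specNorm A := by rw [EuclideanSpace.norm_single, norm_one, mul_one]; rfl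
  have h2 : f (EuclideanSpace.single j (1:ℝ)) i = A i j := by
    show (A *ᵥ Pi.single j (1:ℝ)) i = A i j
    simp
  have h3 : |A i j| ≤ ‖f (EuclideanSpace.single j (1:ℝ))‖ := by
    rw [← h2]
    rw [EuclideanSpace.norm_eq]
    have : |f (EuclideanSpace.single j (1:ℝ)) i| =
        Real.sqrt (‖f (EuclideanSpace.single j (1:ℝ)) i‖ ^ 2) := by
      rw [Real.sqrt_sq_eq_abs]; simp
    rw [this]
    apply Real.sqrt_le_sqrt
    exact Finset.single_le_sum (f := fun k => ‖f (EuclideanSpace.single j (1:ℝ)) k‖ ^ 2)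
      (fun k _ => by positivity) (Finset.mem_univ i)
  exact h3.trans h1

lemma entry_le_one {n : ℕ} {W : Matrix (Fin n) (Fin n) ℝ}
    (hW : Wᵀ * W = 1) (i j : Fin n) : |W i j| ≤ 1 := by
  have h : ∑ k, W k j ^ 2 = 1 := by
    have := congrFun (congrFun hW j) j
    simpa [Matrix.mul_apply, Matrix.one_apply, sq] using this
  have h2 : W i j ^ 2 ≤ 1 := by
    rw [← h]
    exact Finset.single_le_sum (f := fun k => W k j ^ 2)
      (fun k _ => sq_nonneg _) (Finset.mem_univ i)
  nlinarith [abs_nonneg (W i j), sq_abs (W i j)]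

lemma pow4_diff_le {a b : ℝ} (ha : |a| ≤ 1) (hb : |b| ≤ 1) :
    |a ^ 4 - b ^ 4| ≤ 4 * |a - b| := by
  have key : a ^ 4 - b ^ 4 = (a - b) * (a ^ 3 + a ^ 2 * b + a * b ^ 2 + b ^ 3) := by ring
  rw [key, abs_mul]
  have h : |a ^ 3 + a ^ 2 * b + a * b ^ 2 + b ^ 3| ≤ 4 := by
    have := abs_nonneg a
    have := abs_nonneg b
    calc |a ^ 3 + a ^ 2 * b + a * b ^ 2 + b ^ 3|
        ≤ |a| ^ 3 + |a| ^ 2 * |b| + |a| * |b| ^ 2 + |b| ^ 3 := by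
          calc |a ^ 3 + a ^ 2 * b + a * b ^ 2 + b ^ 3|
              ≤ |a ^ 3| + |a ^ 2 * b| + |a * b ^ 2| + |b ^ 3| := by
                apply (abs_add_le _ _).trans
                gcongr
                apply (abs_add_le _ _).trans
                gcongr
                exact abs_add_le _ _
            _ = |a| ^ 3 + |a| ^ 2 * |b| + |a| * |b| ^ 2 + |b| ^ 3 := by
                simp [abs_mul, abs_pow]
      _ ≤ 4 := by nlinarith
  calc |a - b| * |a ^ 3 + a ^ 2 * b + a * b ^ 2 + b ^ 3| ≤ |a - b| * 4 :=
        mul_le_mul_of_nonneg_left h (abs_nonneg _)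
    _ = 4 * |a - b| := by ring

/-- Lipschitz bound for the ℓ⁴-norm over the orthogonal group:
`|‖W₁‖₄⁴ − ‖W₂‖₄⁴| ≤ 4n² ‖W₁ − W₂‖₂`. -/
theorem l4_lipschitz_orthogonal {n : ℕ}
    (W₁ W₂ : Matrix (Fin n) (Fin n) ℝ)
    (hW₁ : W₁ᵀ * W₁ = 1) (hW₂ : W₂ᵀ * W₂ = 1) :
    |l4pow4 W₁ - l4pow4 W₂| ≤ 4 * (n : ℝ) ^ 2 * specNorm (W₁ - W₂) := by
  have key : ∀ i j : Fin n, |W₁ i j ^ 4 - W₂ i j ^ 4| ≤ 4 * specNorm (W₁ - W₂) := by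
    intro i j
    calc |W₁ i j ^ 4 - W₂ i j ^ 4| ≤ 4 * |W₁ i j - W₂ i j| :=
          pow4_diff_le (entry_le_one hW₁ i j) (entry_le_one hW₂ i j)
      _ ≤ 4 * specNorm (W₁ - W₂) := by
          have := entry_le_specNorm (W₁ - W₂) i j
          simp only [Matrix.sub_apply] at this
          linarith
  have hsum : l4pow4 W₁ - l4pow4 W₂ = ∑ i, ∑ j, (W₁ i j ^ 4 - W₂ i j ^ 4) := by
    simp [l4pow4, Finset.sum_sub_distrib]
  rw [hsum]
  calc |∑ i, ∑ j, (W₁ i j ^ 4 - W₂ i j ^ 4)|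
      ≤ ∑ i, ∑ j, |W₁ i j ^ 4 - W₂ i j ^ 4| := by
        apply (Finset.abs_sum_le_sum_abs _ _).trans
        gcongr with i _
        exact Finset.abs_sum_le_sum_abs _ _
    _ ≤ ∑ _i : Fin n, ∑ _j : Fin n, 4 * specNorm (W₁ - W₂) := by
        gcongr with i _ j _
        exact key i j
    _ = 4 * (n : ℝ) ^ 2 * specNorm (W₁ - W₂) := by
        simp [Finset.sum_const]
        ring
end
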